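/- Let 0 < α ≤ 1, let λ ∈ ℂ with λ ≠ 0, and let c ∈ ℂ. If E_α(λ x^α) = e^{c x} for all real x ≥ 0, then α = 1 and λ = c. -/

import Mathlib

open Real Nat Filter
set_option maxHeartbeats 1000000

lemma ml_summable (r α : ℝ) (hr : 0 ≤ r) (hα : 0 < α) :
    Summable (fun k : ℕ => r ^ k / Real.Gamma (1 + k * α)) := by
  set r' : ℝ := max r 1 with hr'
  have hr'1 : 1 ≤ r' := le_max_right _ _
  have hr'0 : 0 < r' := lt_of_lt_of_le one_pos hr'1
  set ρ : ℝ := r' ^ (1/α) with hρ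
  have hρ1 : 1 ≤ ρ := Real.one_le_rpow hr'1 (by positivity)
  have hρ0 : 0 < ρ := lt_of_lt_of_le one_pos hρ1
  obtain ⟨C, hC⟩ : ∃ C : ℝ, ∀ n : ℕ, (2*ρ) ^ n / (n ! : ℝ) ≤ C := by
    obtain ⟨C, hC⟩ := (Real.summable_pow_div_factorial (2*ρ)).tendsto_atTop_zero.bddAbove_range
    exact ⟨C, fun n => hC (Set.mem_range_self n)⟩
  have hC0 : 0 < C := lt_of_lt_of_le (by norm_num : (0:ℝ) < (2*ρ)^0 / ((0:ℕ)! : ℝ)) (hC 0)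
  set q : ℝ := (2:ℝ) ^ (-α) with hq
  have hq0 : 0 ≤ q := Real.rpow_nonneg (by norm_num) _
  have hq1 : q < 1 := Real.rpow_lt_one_of_one_lt_of_neg (by norm_num) (by linarith)
  have key : ∀ k : ℕ, 1 ≤ (k : ℝ) * α →
      r ^ k / Real.Gamma (1 + k * α) ≤ (2 * ρ * C) * q ^ k := by
    intro k hk
    set n : ℕ := ⌊(k : ℝ) * α⌋₊ with hn
    have hn1 : 1 ≤ n := Nat.le_floor (by exact_mod_cast hk)
    have hfl : (n : ℝ) ≤ k * α := Nat.floor_le (by positivity)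
    have hfl2 : (k : ℝ) * α < n + 1 := Nat.lt_floor_add_one _
    have hΓ : (n ! : ℝ) ≤ Real.Gamma (1 + k * α) := by
      rw [← Real.Gamma_nat_eq_factorial]
      have h2 : (2:ℝ) ≤ (n : ℝ) + 1 := by
        have : (1:ℝ) ≤ n := by exact_mod_cast hn1
        linarith
      have hle : (n : ℝ) + 1 ≤ 1 + k * α := by linarith
      rcases eq_or_lt_of_le hle with heq | hlt
      · rw [heq]
      · exact (Real.Gamma_strictMonoOn_Ici h2 (le_trans h2 hle) hlt).le
    have hΓpos : 0 < Real.Gamma (1 + k * α) := Real.Gamma_pos_of_pos (by positivity)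
    have hfact : (0:ℝ) < (n ! : ℝ) := by positivity
    have hrk : r ^ k ≤ ρ ^ (n + 1) := by
      have h1 : r ^ k ≤ r' ^ k := pow_le_pow_left₀ hr (le_max_left _ _) k
      have h3 : r' ^ (k : ℝ) ≤ r' ^ (((n:ℝ) + 1) / α) := by
        apply Real.rpow_le_rpow_of_exponent_le hr'1
        rw [le_div_iff₀ hα]; linarith
      have h4 : r' ^ (((n:ℝ) + 1) / α) = ρ ^ (n + 1) := by
        rw [hρ, ← Real.rpow_natCast (r' ^ (1/α)) (n+1), ← Real.rpow_mul hr'0.le]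
        congr 1
        push_cast
        field_simp
      calc r ^ k ≤ r' ^ k := h1
        _ = r' ^ (k:ℝ) := (Real.rpow_natCast _ _).symm
        _ ≤ r' ^ (((n:ℝ)+1)/α) := h3
        _ = ρ ^ (n+1) := h4
    have step1 : r ^ k / Real.Gamma (1 + k * α) ≤ ρ ^ (n+1) / (n ! : ℝ) :=
      div_le_div₀ (by positivity) hrk hfact hΓ
    have step2 : ρ ^ n / (n ! : ℝ) ≤ C / 2 ^ n := by
      have h := hC n
      rw [mul_pow] at h
      rw [div_le_iff₀ hfact] at h
      rw [div_le_div_iff₀ hfact (by positivity : (0:ℝ) < 2^n)]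
      calc ρ ^ n * 2 ^ n = 2 ^ n * ρ ^ n := by ring
        _ ≤ C * ↑n ! := h
    have step3 : C / (2:ℝ) ^ n ≤ 2 * C * q ^ k := by
      have hqk : q ^ k = (2:ℝ) ^ (-((k:ℝ) * α)) := by
        rw [hq, ← Real.rpow_natCast ((2:ℝ)^(-α)) k, ← Real.rpow_mul (by norm_num)]
        ring_nf
      have h2n : ((2:ℝ) ^ n : ℝ) = (2:ℝ) ^ ((n:ℝ)) := (Real.rpow_natCast 2 n).symm
      rw [hqk, h2n, div_le_iff₀ (by positivity : (0:ℝ) < (2:ℝ)^((n:ℝ)))]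
      have : (2:ℝ) ^ ((k:ℝ)*α) ≤ (2:ℝ) ^ ((n:ℝ) + 1) :=
        Real.rpow_le_rpow_of_exponent_le (by norm_num) (by linarith)
      have hpos : (0:ℝ) < (2:ℝ) ^ ((k:ℝ)*α) := Real.rpow_pos_of_pos (by norm_num) _
      have hrw : (2:ℝ) ^ (-((k:ℝ)*α)) = ((2:ℝ) ^ ((k:ℝ)*α))⁻¹ := by
        rw [Real.rpow_neg (by norm_num)]
      rw [hrw]
      have h21 : (2:ℝ) ^ ((n:ℝ)+1) = 2 * (2:ℝ)^((n:ℝ)) := by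
        rw [Real.rpow_add (by norm_num), Real.rpow_one]; ring
      rw [h21] at this
      have hn2 : (0:ℝ) < (2:ℝ)^((n:ℝ)) := Real.rpow_pos_of_pos (by norm_num) _
      calc C = C * ((2:ℝ)^((k:ℝ)*α))⁻¹ * (2:ℝ)^((k:ℝ)*α) := by field_simp
        _ ≤ C * ((2:ℝ)^((k:ℝ)*α))⁻¹ * (2 * (2:ℝ)^((n:ℝ))) := by
            apply mul_le_mul_of_nonneg_left this (by positivity)
        _ = 2 * C * ((2:ℝ)^((k:ℝ)*α))⁻¹ * (2:ℝ)^((n:ℝ)) := by ring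
    calc r ^ k / Real.Gamma (1 + k * α) ≤ ρ ^ (n+1) / (n ! : ℝ) := step1
      _ = ρ * (ρ ^ n / (n ! : ℝ)) := by rw [pow_succ]; ring
      _ ≤ ρ * (C / 2 ^ n) := by apply mul_le_mul_of_nonneg_left step2 hρ0.le
      _ ≤ ρ * (2 * C * q ^ k) := by apply mul_le_mul_of_nonneg_left step3 hρ0.le
      _ = (2 * ρ * C) * q ^ k := by ring
  -- now conclude summability via shifting
  set K : ℕ := ⌈1/α⌉₊ with hK
  rw [← summable_nat_add_iff K]
  apply Summable.of_nonneg_of_le (f := fun k => (2 * ρ * C) * q ^ (k + K))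
  · intro k
    have : 0 < Real.Gamma (1 + (k + K : ℕ) * α) := Real.Gamma_pos_of_pos (by positivity)
    positivity
  · intro k
    apply key
    have hK1 : 1/α ≤ (K : ℝ) := Nat.le_ceil _
    have : (K:ℝ) * α ≥ 1 := by
      rw [ge_iff_le, ← div_le_iff₀ hα] at *
      linarith
    have hkK : (K:ℝ) ≤ ((k + K : ℕ) : ℝ) := by push_cast; linarith [Nat.cast_nonneg (α := ℝ) k]
    nlinarith [Nat.cast_nonneg (α := ℝ) k]
  · exact ((summable_geometric_of_lt_one hq0 hq1).mul_left _).comp_injective (add_left_injective K)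

/-- If `0 < α ≤ 1`, `λ ≠ 0`, and `E_α(λ x^α) = e^{c x}` for all `x ≥ 0`, then
`α = 1` and `λ = c`. -/
theorem mittagLeffler_eq_exp_forces (α : ℝ) (hα0 : 0 < α) (hα1 : α ≤ 1)
    (lam c : ℂ) (hlam : lam ≠ 0)
    (h : ∀ x : ℝ, 0 ≤ x →
      (∑' k : ℕ, (lam * ((x ^ α : ℝ) : ℂ)) ^ k /
        Complex.Gamma ((1 + k * α : ℝ) : ℂ)) = Complex.exp (c * x)) :
    α = 1 ∧ lam = c := by
  set f : ℝ → ℕ → ℂ := fun x k =>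
    (lam * ((x ^ α : ℝ) : ℂ)) ^ k / Complex.Gamma ((1 + k * α : ℝ) : ℂ) with hf
  have hΓpos : ∀ k : ℕ, 0 < Real.Gamma (1 + k * α) := fun k =>
    Real.Gamma_pos_of_pos (by positivity)
  have hΓc : ∀ k : ℕ, Complex.Gamma ((1 + k * α : ℝ) : ℂ) = ((Real.Gamma (1 + k * α) : ℝ) : ℂ) :=
    fun k => Complex.Gamma_ofReal _
  have hΓcne : ∀ k : ℕ, Complex.Gamma ((1 + k * α : ℝ) : ℂ) ≠ 0 := by
    intro k; rw [hΓc k]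
    exact_mod_cast (hΓpos k).ne'
  -- norm of terms
  have hnorm : ∀ x : ℝ, 0 ≤ x → ∀ k : ℕ,
      ‖f x k‖ = ‖lam‖ ^ k * (x ^ α) ^ k / Real.Gamma (1 + k * α) := by
    intro x hx k
    have hxa : 0 ≤ x ^ α := Real.rpow_nonneg hx α
    rw [hf]
    simp only [norm_div, norm_pow, norm_mul, hΓc, Complex.norm_real, Real.norm_eq_abs,
      abs_of_nonneg hxa, abs_of_nonneg (hΓpos k).le, mul_pow]
  -- summability of norms for 0 ≤ x ≤ 1
  have hsumnorm : ∀ x : ℝ, 0 ≤ x → x ≤ 1 → Summable (fun k => ‖f x k‖) := by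
    intro x hx hx1
    apply Summable.of_nonneg_of_le (f := fun k : ℕ => ‖lam‖ ^ k / Real.Gamma (1 + k * α))
      (fun k => norm_nonneg _) ?_ (ml_summable _ _ (norm_nonneg _) hα0)
    intro k
    rw [hnorm x hx k]
    have hxa1 : x ^ α ≤ 1 := Real.rpow_le_one hx hx1 hα0.le
    have hxa0 : 0 ≤ x ^ α := Real.rpow_nonneg hx α
    have hnum : ‖lam‖ ^ k * (x ^ α) ^ k ≤ ‖lam‖ ^ k :=
      calc ‖lam‖ ^ k * (x ^ α) ^ k ≤ ‖lam‖ ^ k * 1 :=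
            mul_le_mul_of_nonneg_left (pow_le_one₀ hxa0 hxa1) (by positivity)
        _ = ‖lam‖ ^ k := mul_one _
    rw [div_le_div_iff₀ (hΓpos k) (hΓpos k)]
    exact mul_le_mul_of_nonneg_right hnum (hΓpos k).le
  have hsum : ∀ x : ℝ, 0 ≤ x → x ≤ 1 → Summable (f x) :=
    fun x hx hx1 => (hsumnorm x hx hx1).of_norm
  -- the tail
  set C : ℝ := ∑' k : ℕ, ‖lam‖ ^ (k + 2) / Real.Gamma (1 + (k + 2 : ℕ) * α) with hC
  have hCs : Summable (fun k : ℕ => ‖lam‖ ^ (k + 2) / Real.Gamma (1 + (k + 2 : ℕ) * α)) := by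
    have := (summable_nat_add_iff 2).2 (ml_summable ‖lam‖ α (norm_nonneg _) hα0)
    exact this
  have hC0 : 0 ≤ C := tsum_nonneg fun k => by positivity
  set T : ℝ → ℂ := fun x => ∑' k : ℕ, f x (k + 2) with hT
  have hTbound : ∀ x : ℝ, 0 < x → x ≤ 1 → ‖T x‖ ≤ (x ^ α) ^ 2 * C := by
    intro x hx hx1
    have hx0 : (0:ℝ) ≤ x := hx.le
    have hxa1 : x ^ α ≤ 1 := Real.rpow_le_one hx0 hx1 hα0.le
    have hxa0 : 0 ≤ x ^ α := Real.rpow_nonneg hx0 α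
    have hsn : Summable (fun k => ‖f x (k + 2)‖) :=
      (summable_nat_add_iff 2).2 (hsumnorm x hx0 hx1)
    calc ‖T x‖ ≤ ∑' k : ℕ, ‖f x (k + 2)‖ := norm_tsum_le_tsum_norm hsn
      _ ≤ ∑' k : ℕ, (x ^ α) ^ 2 * (‖lam‖ ^ (k + 2) / Real.Gamma (1 + (k + 2 : ℕ) * α)) := by
          apply Summable.tsum_le_tsum ?_ hsn (hCs.mul_left _)
          intro k
          rw [hnorm x hx0 (k + 2)]
          have h1 : (x ^ α) ^ (k + 2) ≤ (x ^ α) ^ 2 := by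
            apply pow_le_pow_of_le_one hxa0 hxa1
            omega
          rw [div_eq_mul_inv, div_eq_mul_inv]
          have : ‖lam‖ ^ (k+2) * (x ^ α) ^ (k+2) ≤ (x^α)^2 * ‖lam‖^(k+2) := by
            calc ‖lam‖ ^ (k+2) * (x ^ α) ^ (k+2) ≤ ‖lam‖ ^ (k+2) * (x ^ α) ^ 2 :=
                  mul_le_mul_of_nonneg_left h1 (by positivity)
              _ = (x^α)^2 * ‖lam‖^(k+2) := by ring
          calc ‖lam‖ ^ (k+2) * (x ^ α) ^ (k+2) * (Real.Gamma (1 + (k+2:ℕ) * α))⁻¹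
              ≤ (x^α)^2 * ‖lam‖^(k+2) * (Real.Gamma (1 + (k+2:ℕ) * α))⁻¹ := by
                exact mul_le_mul_of_nonneg_right this (inv_nonneg.2 (hΓpos (k+2)).le)
            _ = (x^α)^2 * (‖lam‖^(k+2) * (Real.Gamma (1 + (k+2:ℕ) * α))⁻¹) := by ring
      _ = (x ^ α) ^ 2 * C := by rw [tsum_mul_left]
  -- sequence tending to 0
  set u : ℕ → ℝ := fun n => 1 / (n + 1) with hu
  have hupos : ∀ n, 0 < u n := fun n => by positivity
  have hule : ∀ n, u n ≤ 1 := fun n => by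
    rw [hu, div_le_one (by positivity)]
    simp
  have hu0 : Filter.Tendsto u atTop (nhds 0) := tendsto_one_div_add_atTop_nhds_zero_nat
  set G : ℂ := Complex.Gamma ((1 + (1:ℕ) * α : ℝ) : ℂ) with hG
  have hGne : G ≠ 0 := hΓcne 1
  have hid : ∀ n : ℕ, lam / G =
      (Complex.exp (c * u n) - 1) / ((u n ^ α : ℝ) : ℂ) - T (u n) / ((u n ^ α : ℝ) : ℂ) := by
    intro n
    have hx := hupos n
    set y : ℂ := ((u n ^ α : ℝ) : ℂ) with hy
    have hyne : y ≠ 0 := Complex.ofReal_ne_zero.2 (Real.rpow_pos_of_pos hx α).ne'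
    have heq := h (u n) hx.le
    have hs := hsum (u n) hx.le (hule n)
    have hs1 := (summable_nat_add_iff 1).2 hs
    have hf0 : f (u n) 0 = 1 := by
      rw [hf]
      norm_num [Complex.Gamma_one]
    have hf1 : f (u n) 1 = lam * y / G := by
      rw [hf, hG, hy]
      norm_num
    have hsplit : (∑' k : ℕ, f (u n) k) = f (u n) 0 + (f (u n) 1 + T (u n)) := by
      rw [Summable.tsum_eq_zero_add hs, Summable.tsum_eq_zero_add hs1]
    have h2 : lam * y / G = Complex.exp (c * u n) - 1 - T (u n) := by
      rw [hsplit, hf0, hf1] at heq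
      linear_combination heq
    calc lam / G = (lam * y / G) / y := by
          field_simp
      _ = (Complex.exp (c * u n) - 1 - T (u n)) / y := by rw [h2]
      _ = (Complex.exp (c * u n) - 1) / y - T (u n) / y := by ring
  -- derivative of exp at 0
  have hderiv : HasDerivAt (fun t : ℝ => Complex.exp (c * t)) c 0 := by
    have h1 : HasDerivAt (fun z : ℂ => Complex.exp (c * z)) (Complex.exp (c * 0) * (c * 1)) 0 :=
      (Complex.hasDerivAt_exp (c * 0)).comp 0 ((hasDerivAt_id (0:ℂ)).const_mul c)
    simpa using h1.comp_ofReal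
  have htu : Filter.Tendsto u atTop (nhdsWithin 0 {(0:ℝ)}ᶜ) :=
    tendsto_nhdsWithin_of_tendsto_nhds_of_eventually_within u hu0
      (Filter.Eventually.of_forall fun n => by simp [(hupos n).ne'])
  have hA : Filter.Tendsto (fun n => (Complex.exp (c * u n) - 1) / ((u n : ℝ) : ℂ))
      atTop (nhds c) := by
    have h1 := (hasDerivAt_iff_tendsto_slope.mp hderiv).comp htu
    refine h1.congr fun n => ?_
    have hne : ((u n : ℝ) : ℂ) ≠ 0 := Complex.ofReal_ne_zero.2 (hupos n).ne'
    simp only [Function.comp_apply, slope, vsub_eq_sub, sub_zero, mul_zero, Complex.exp_zero,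
      Complex.real_smul, Complex.ofReal_inv, Complex.ofReal_zero]
    rw [inv_mul_eq_div]
  have hB : Filter.Tendsto (fun n => (u n) ^ (1 - α)) atTop (nhds ((0:ℝ) ^ (1 - α))) :=
    ((Real.continuousAt_rpow_const 0 (1 - α) (Or.inr (by linarith))).tendsto).comp hu0
  have hAB : Filter.Tendsto (fun n => (Complex.exp (c * u n) - 1) / ((u n ^ α : ℝ) : ℂ))
      atTop (nhds (c * ((((0:ℝ) ^ (1 - α) : ℝ)) : ℂ))) := by
    have h2 := hA.mul ((Complex.continuous_ofReal.tendsto _).comp hB)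
    refine h2.congr fun n => ?_
    have hun := hupos n
    have h1 : (u n) ^ α * (u n) ^ (1 - α) = u n := by
      rw [← Real.rpow_add hun]
      norm_num
    have hane : ((u n ^ α : ℝ) : ℂ) ≠ 0 :=
      Complex.ofReal_ne_zero.2 (Real.rpow_pos_of_pos hun α).ne'
    have hne : ((u n : ℝ) : ℂ) ≠ 0 := Complex.ofReal_ne_zero.2 hun.ne'
    simp only [Function.comp_apply]
    rw [div_mul_eq_mul_div, div_eq_div_iff hne hane, mul_assoc, ← Complex.ofReal_mul,
      mul_comm ((u n)^(1-α)) _, h1]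
  have hD : Filter.Tendsto (fun n => T (u n) / ((u n ^ α : ℝ) : ℂ)) atTop (nhds 0) := by
    refine squeeze_zero_norm (f := fun n => T (u n) / ((u n ^ α : ℝ) : ℂ))
      (a := fun n => (u n) ^ α * C) ?_ ?_
    · intro n
      have hun := hupos n
      have hxa : (0:ℝ) < (u n) ^ α := Real.rpow_pos_of_pos hun α
      rw [norm_div, Complex.norm_real, Real.norm_eq_abs, abs_of_nonneg hxa.le]
      rw [div_le_iff₀ hxa]
      calc ‖T (u n)‖ ≤ ((u n) ^ α) ^ 2 * C := hTbound (u n) hun (hule n)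
        _ = (u n) ^ α * C * (u n) ^ α := by ring
    · have h3 := ((Real.continuousAt_rpow_const 0 α (Or.inr hα0.le)).tendsto).comp hu0
      rw [Real.zero_rpow hα0.ne'] at h3
      simpa using h3.mul_const C
  have hfinal : lam / G = c * ((((0:ℝ) ^ (1 - α) : ℝ)) : ℂ) := by
    have hconst : Filter.Tendsto (fun _ : ℕ => lam / G) atTop (nhds (lam / G)) :=
      tendsto_const_nhds
    have h4 : Filter.Tendsto (fun n => (Complex.exp (c * u n) - 1) / ((u n ^ α : ℝ) : ℂ)
        - T (u n) / ((u n ^ α : ℝ) : ℂ)) atTop (nhds (c * ((((0:ℝ) ^ (1 - α) : ℝ)) : ℂ) - 0)) :=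
      hAB.sub hD
    rw [sub_zero] at h4
    have h5 : (fun _ : ℕ => lam / G) = fun n => (Complex.exp (c * u n) - 1) / ((u n ^ α : ℝ) : ℂ)
        - T (u n) / ((u n ^ α : ℝ) : ℂ) := funext hid
    rw [h5] at hconst
    exact tendsto_nhds_unique hconst h4
  rcases eq_or_lt_of_le hα1 with heq | hlt
  · subst heq
    refine ⟨rfl, ?_⟩
    have hG1 : G = 1 := by
      rw [hG, hΓc 1]
      norm_num [Real.Gamma_two]
    rw [hG1, div_one] at hfinal
    rw [hfinal]
    norm_num
  · exfalso
    have h0 : (0:ℝ) ^ (1 - α) = 0 := Real.zero_rpow (by linarith)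
    rw [h0] at hfinal
    simp only [Complex.ofReal_zero, mul_zero, div_eq_zero_iff] at hfinal
    rcases hfinal with h1 | h1
    · exact hlam h1
    · exact hGne h1
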